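/- Let δ > 0. If S ⊆ ℤ is finite and δ-nonrecurrent, then for all sufficiently large m ∈ ℕ there exists a set B ⊆ [m] such that (B,m) witnesses the δ-nonrecurrence of S. -/

import Mathlib

open Pointwise

/-- The upper asymptotic density of a set of integers:
`limsup_{N→∞} |A ∩ {1,…,N}| / N`. -/
noncomputable def upperDensity (A : Set ℤ) : ℝ :=
  Filter.limsup (fun N : ℕ => ((A ∩ Set.Icc (1 : ℤ) (N : ℤ)).ncard : ℝ) / N) Filter.atTop

/-- `S ⊆ ℤ` is `δ`-nonrecurrent: there is `A ⊆ ℤ` with `d̄(A) > δ` and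
`(A - A) ∩ S = ∅`. -/
def IntNonrecurrent (δ : ℝ) (S : Set ℤ) : Prop :=
  ∃ A : Set ℤ, δ < upperDensity A ∧ ∀ a ∈ A, ∀ b ∈ A, a - b ∉ S

/-- `(B, m)` witnesses the `δ`-nonrecurrence of `S`: `B ⊆ [m] = {0,…,m-1}`,
`|B| > δ m`, `B ∩ (B + S) = ∅`, `B + S ⊆ [m]`, and `B + S + S ⊆ [m]`. -/
def Witnesses (δ : ℝ) (S B : Set ℤ) (m : ℕ) : Prop :=
  B ⊆ Set.Ico (0 : ℤ) (m : ℤ) ∧ δ * (m : ℝ) < (B.ncard : ℝ) ∧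
    B ∩ (B + S) = ∅ ∧ B + S ⊆ Set.Ico (0 : ℤ) (m : ℤ) ∧
    B + S + S ⊆ Set.Ico (0 : ℤ) (m : ℤ)

private lemma ncard_biUnion_le' {ι : Type*} (t : Finset ι) (f : ι → Set ℤ) :
    (⋃ i ∈ t, f i).ncard ≤ ∑ i ∈ t, (f i).ncard := by
  classical
  induction t using Finset.induction with
  | empty => simp
  | insert _ _ ha ih =>
    rw [Finset.sum_insert ha, Finset.set_biUnion_insert]
    exact le_trans (Set.ncard_union_le _ _) (by omega)

/-- If `S ⊆ ℤ` is finite and `δ`-nonrecurrent (with `δ > 0`), then for all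
sufficiently large `m` there is `B ⊆ [m]` such that `(B, m)` witnesses the
`δ`-nonrecurrence of `S`. -/
theorem eventually_exists_witness (δ : ℝ) (hδ : 0 < δ) (S : Set ℤ) (hS : S.Finite)
    (hnon : IntNonrecurrent δ S) :
    ∀ᶠ m : ℕ in Filter.atTop, ∃ B : Set ℤ, Witnesses δ S B m := by
  classical
  obtain ⟨A, hA, hAA⟩ := hnon
  obtain ⟨K, hK⟩ : ∃ K : ℕ, ∀ s ∈ S, |s| ≤ (K : ℤ) := by
    obtain ⟨K, hKb⟩ := (hS.image Int.natAbs).bddAbove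
    refine ⟨K, fun s hs => ?_⟩
    have := hKb (Set.mem_image_of_mem _ hs)
    rw [Int.abs_eq_natAbs]
    exact_mod_cast this
  set f : ℕ → ℝ := fun N => ((A ∩ Set.Icc (1 : ℤ) (N : ℤ)).ncard : ℝ) / N with hfdef
  have hfnonneg : ∀ N, 0 ≤ f N := fun N => div_nonneg (by positivity) (by positivity)
  set η : ℝ := (upperDensity A - δ) / 2 with hηdef
  have hη : 0 < η := by rw [hηdef]; linarith
  have hδη : δ + η < upperDensity A := by rw [hηdef]; linarith
  have hud : upperDensity A = Filter.limsup f Filter.atTop := rfl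
  have hfreq : ∃ᶠ N in Filter.atTop, δ + η < f N := by
    refine Filter.frequently_lt_of_lt_limsup ?_ (by rw [← hud]; exact hδη)
    exact Filter.isCoboundedUnder_le_of_le _ hfnonneg
  have h2 : ∀ᶠ m : ℕ in Filter.atTop, (4 * K : ℝ) + 8 * K * δ / η ≤ (m : ℝ) :=
    tendsto_natCast_atTop_atTop.eventually_ge_atTop _
  filter_upwards [Filter.eventually_ge_atTop (4 * K + 1), h2] with m hm1 hm2
  set L : ℕ := m - 4 * K with hLdef
  have hL1 : 1 ≤ L := by omega
  have hLZ : (L : ℤ) = (m : ℤ) - 4 * K := by omega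
  have hLcast : (L : ℝ) = (m : ℝ) - 4 * K := by
    rw [hLdef, Nat.cast_sub (by omega)]; push_cast; ring
  -- key size condition
  have hm2' : 4 * (K : ℝ) * η + 8 * K * δ ≤ η * m := by
    have h := mul_le_mul_of_nonneg_right hm2 hη.le
    rw [add_mul, div_mul_cancel₀ _ hη.ne'] at h
    linarith
  have hkey : δ * m ≤ (δ + η / 2) * L := by
    rw [hLcast]
    nlinarith [hm2']
  -- choose N
  obtain ⟨N, hN1, hN2⟩ :=
    (hfreq.and_eventually (Filter.eventually_ge_atTop (max 1 ⌈2 * δ * m / η⌉₊))).exists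
  have hN1' : 1 ≤ N := le_trans (le_max_left _ _) hN2
  have hNpos : (0 : ℝ) < N := by exact_mod_cast hN1'
  have hNbig : 2 * δ * m / η ≤ (N : ℝ) :=
    le_trans (Nat.le_ceil _) (by exact_mod_cast le_trans (le_max_right _ _) hN2)
  have hδmN : δ * m ≤ η / 2 * N := by
    rw [div_le_iff₀ hη] at hNbig; nlinarith
  have hcount : (δ + η) * N < ((A ∩ Set.Icc (1 : ℤ) (N : ℤ)).ncard : ℝ) :=
    (lt_div_iff₀ hNpos).mp hN1
  set q : ℕ := N / L + 1 with hqdef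
  -- pigeonhole: some block is dense
  have hblock : ∃ j : ℕ,
      δ * m < ((A ∩ Set.Icc (1 + (j : ℤ) * L) (((j : ℤ) + 1) * L)).ncard : ℝ) := by
    by_contra hcon
    push_neg at hcon
    have hcover : A ∩ Set.Icc (1 : ℤ) (N : ℤ) ⊆
        ⋃ j ∈ Finset.range q, A ∩ Set.Icc (1 + (j : ℤ) * L) (((j : ℤ) + 1) * L) := by
      rintro x ⟨hxA, hx1, hxN⟩
      set n : ℕ := (x - 1).toNat with hndef
      have hxn : x = (n : ℤ) + 1 := by omega
      have hnN : n + 1 ≤ N := by omega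
      set j : ℕ := n / L with hjdef
      have hj1 : j * L ≤ n := Nat.div_mul_le_self n L
      have hj2 : n < j * L + L := by
        conv_lhs => rw [← Nat.div_add_mod n L]
        rw [hjdef, Nat.mul_comm]
        exact Nat.add_lt_add_left (Nat.mod_lt n (by omega)) _
      have hj1' : (j : ℤ) * L ≤ (n : ℤ) := by exact_mod_cast hj1
      have hj2' : (n : ℤ) < (j : ℤ) * L + L := by exact_mod_cast hj2
      have hjq : j ∈ Finset.range q := by
        rw [Finset.mem_range, hqdef, hjdef]
        exact Nat.lt_succ_of_le (Nat.div_le_div_right (by omega))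
      have hxmem : x ∈ A ∩ Set.Icc (1 + (j : ℤ) * L) (((j : ℤ) + 1) * L) := by
        refine ⟨hxA, ?_, ?_⟩
        · linarith
        · have : ((j : ℤ) + 1) * L = (j : ℤ) * L + L := by ring
          linarith
      exact Set.mem_biUnion hjq hxmem
    have hfinU : (⋃ j ∈ Finset.range q,
        A ∩ Set.Icc (1 + (j : ℤ) * L) (((j : ℤ) + 1) * L)).Finite :=
      Set.Finite.biUnion (Finset.finite_toSet _)
        (fun j _ => (Set.finite_Icc _ _).inter_of_right _)
    have h1 : (A ∩ Set.Icc (1 : ℤ) (N : ℤ)).ncard ≤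
        ∑ j ∈ Finset.range q, (A ∩ Set.Icc (1 + (j : ℤ) * L) (((j : ℤ) + 1) * L)).ncard :=
      le_trans (Set.ncard_le_ncard hcover hfinU) (ncard_biUnion_le' _ _)
    have htot : ((A ∩ Set.Icc (1 : ℤ) (N : ℤ)).ncard : ℝ) ≤ q * (δ * m) := by
      calc ((A ∩ Set.Icc (1 : ℤ) (N : ℤ)).ncard : ℝ)
          ≤ ∑ j ∈ Finset.range q,
            ((A ∩ Set.Icc (1 + (j : ℤ) * L) (((j : ℤ) + 1) * L)).ncard : ℝ) := by
            exact_mod_cast h1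
        _ ≤ ∑ _j ∈ Finset.range q, δ * m := Finset.sum_le_sum (fun j _ => hcon j)
        _ = q * (δ * m) := by rw [Finset.sum_const, Finset.card_range, nsmul_eq_mul]
    have hLpos : (0 : ℝ) < L := by exact_mod_cast hL1
    have hq : (q : ℝ) ≤ (N : ℝ) / L + 1 := by
      rw [hqdef]
      push_cast
      have := Nat.cast_div_le (α := ℝ) (m := N) (n := L)
      linarith
    have e1 : δ * m * ((N : ℝ) / L) ≤ (δ + η / 2) * N := by
      calc δ * m * ((N : ℝ) / L) ≤ ((δ + η / 2) * L) * ((N : ℝ) / L) :=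
            mul_le_mul_of_nonneg_right hkey (by positivity)
        _ = (δ + η / 2) * N := by field_simp
    have e2 : (q : ℝ) * (δ * m) ≤ ((N : ℝ) / L + 1) * (δ * m) :=
      mul_le_mul_of_nonneg_right hq (by positivity)
    nlinarith
  obtain ⟨j, hj⟩ := hblock
  set lo : ℤ := 1 + (j : ℤ) * L with hlodef
  set C : Set ℤ := A ∩ Set.Icc lo (((j : ℤ) + 1) * L) with hCdef
  have hhi : ((j : ℤ) + 1) * (L : ℤ) = lo + (L : ℤ) - 1 := by rw [hlodef]; ring
  have hK0 : (0 : ℤ) ≤ (K : ℤ) := Int.natCast_nonneg K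
  set t : ℤ := 2 * K - lo with htdef
  have hCbound : ∀ c ∈ C, lo ≤ c ∧ c ≤ lo + (L : ℤ) - 1 := by
    rintro c ⟨_, hc1, hc2⟩
    exact ⟨hc1, by linarith [hhi]⟩
  refine ⟨(fun x => x + t) '' C, ?_, ?_, ?_, ?_, ?_⟩
  · rintro x ⟨c, hc, rfl⟩
    obtain ⟨h1, h2⟩ := hCbound c hc
    show c + t ∈ Set.Ico (0 : ℤ) m
    rw [Set.mem_Ico]
    constructor <;> linarith
  · rw [Set.ncard_image_of_injective _ (add_left_injective t)]
    exact hj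
  · rw [Set.eq_empty_iff_forall_notMem]
    rintro x ⟨⟨c, hc, hct⟩, hx2⟩
    rw [Set.mem_add] at hx2
    obtain ⟨b, ⟨c', hc', hct'⟩, s, hs, hbs⟩ := hx2
    have h1 : c + t = x := hct
    have h2 : c' + t = b := hct'
    have hcs : c - c' = s := by linarith
    exact hAA c hc.1 c' hc'.1 (hcs ▸ hs)
  · rintro x hx
    rw [Set.mem_add] at hx
    obtain ⟨b, ⟨c, hc, hct⟩, s, hs, rfl⟩ := hx
    have h1 : c + t = b := hct
    obtain ⟨hcl, hcu⟩ := hCbound c hc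
    have hsK := abs_le.mp (hK s hs)
    rw [Set.mem_Ico]
    constructor <;> linarith
  · rintro x hx
    rw [Set.mem_add] at hx
    obtain ⟨y, hy, s2, hs2, rfl⟩ := hx
    rw [Set.mem_add] at hy
    obtain ⟨b, ⟨c, hc, hct⟩, s, hs, rfl⟩ := hy
    have h1 : c + t = b := hct
    obtain ⟨hcl, hcu⟩ := hCbound c hc
    have hsK := abs_le.mp (hK s hs)
    have hs2K := abs_le.mp (hK s2 hs2)
    rw [Set.mem_Ico]
    constructor <;> linarith
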